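/- (Minimizing variant of the ε-correspondence.) Let G be a discounted-sum game with agents Ω and let ε > 0. Suppose each agent i has a multi-satisficing goal ⟨≤, T_i⟩ such that: (1) the relation is ≤; (2) the smallest threshold a_i of T_i satisfies a_i ≤ R_i(ρ) for every play ρ; (3) the largest threshold z_i of T_i satisfies z_i ≥ R_i(ρ) for every play ρ; and (4) every two consecutive thresholds t_j, t_{j+1} of T_i satisfy t_{j+1} − t_j ≤ ε. Then for every strategy profile σ that is a Nash equilibrium of the resulting multi-satisficing game, no agent i has a strategy σ'_i with R_i(ρ_{⟨σ_{−i},σ'_i⟩}) ≤ R_i(ρ_σ) − ε; that is, σ is a modified ε-equilibrium in which no agent can unilaterally decrease his cumulative reward by at least ε. -/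

import Mathlib

/-- A discounted-sum game: finite nonempty state set `V` with initial state `v0`,
`k` agents each with a finite nonempty action set `A i`, deterministic transition
function `tr`, integer discount factor `γ > 1`, and reward function `wt`
assigning each state-decision pair an integer reward for each agent. -/
structure DSGame where
  V : Type
  fintypeV : Fintype V
  nonemptyV : Nonempty V
  v0 : V
  k : ℕ
  A : Fin k → Type
  fintypeA : ∀ i, Fintype (A i)
  nonemptyA : ∀ i, Nonempty (A i)
  tr : V → (∀ i, A i) → V
  γ : ℤ
  hγ : 1 < γ
  wt : V → (∀ i, A i) → Fin k → ℤ

namespace DSGame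

variable (G : DSGame)

instance : Fintype G.V := G.fintypeV
instance : Nonempty G.V := G.nonemptyV
instance (i : Fin G.k) : Fintype (G.A i) := G.fintypeA i
instance (i : Fin G.k) : Nonempty (G.A i) := G.nonemptyA i

/-- The set of decisions `D = A_0 × ⋯ × A_{k-1}`. -/
abbrev D := ∀ i : Fin G.k, G.A i

instance : Nonempty G.D := ⟨fun i => Classical.arbitrary (G.A i)⟩
instance : Nonempty (G.V × G.D) := ⟨Classical.arbitrary G.V, Classical.arbitrary G.D⟩

/-- A play from state `v`: an infinite sequence of state-decision pairs starting at `v`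
and following the transition function. -/
def IsPlayFrom (v : G.V) (ρ : ℕ → G.V × G.D) : Prop :=
  (ρ 0).1 = v ∧ ∀ j : ℕ, (ρ (j + 1)).1 = G.tr (ρ j).1 (ρ j).2

/-- A play of the game (from the initial state). -/
def IsPlay (ρ : ℕ → G.V × G.D) : Prop := G.IsPlayFrom G.v0 ρ

/-- Cumulative reward of agent `i` on a play: `R_i(ρ) = Σ_j W(v_j,d_j)[i]·γ^{-j}`. -/
noncomputable def reward (i : Fin G.k) (ρ : ℕ → G.V × G.D) : ℝ :=
  ∑' j : ℕ, (G.wt (ρ j).1 (ρ j).2 i : ℝ) / (G.γ : ℝ) ^ j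

/-- A (deterministic) strategy for agent `i`: a function of the observed history. -/
def Strategy (i : Fin G.k) : Type := List (G.V × G.D) → G.V → G.A i

/-- A strategy profile: one strategy per agent. -/
abbrev Profile := ∀ i : Fin G.k, G.Strategy i

/-- History (list of state-decision pairs seen so far) and current state after `j` steps
when the profile `π` is followed. -/
def hist (π : G.Profile) : ℕ → List (G.V × G.D) × G.V
  | 0 => ([], G.v0)
  | j + 1 =>
      let p : List (G.V × G.D) × G.V := hist π j
      let d : G.D := fun i => π i p.1 p.2
      (p.1 ++ [(p.2, d)], G.tr p.2 d)

/-- The primary trace `ρ_π` of a strategy profile `π`. -/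
def play (π : G.Profile) (j : ℕ) : G.V × G.D :=
  ((G.hist π j).2, fun i => π i (G.hist π j).1 (G.hist π j).2)

/-- `⟨π_{-i}, πi⟩`: the profile `π` with agent `i`'s strategy replaced by `πi`. -/
def updProf (π : G.Profile) (i : Fin G.k) (πi : G.Strategy i) : G.Profile :=
  Function.update π i πi

/-- An informed strategy for agent `j`: a function of the history, the current state
and the other agents' current actions. -/
def InfStrategy (j : Fin G.k) : Type :=
  List (G.V × G.D) → G.V → (∀ i : Fin G.k, i ≠ j → G.A i) → G.A j

/-- A play `ρ` is consistent (from step `start` onward) with the informed strategy `s`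
of agent `j` if at every step `m ≥ start` agent `j`'s action is the one prescribed
by `s` given the history, current state, and others' current actions. -/
def Consistent (j : Fin G.k) (s : G.InfStrategy j) (ρ : ℕ → G.V × G.D) (start : ℕ) : Prop :=
  ∀ m : ℕ, start ≤ m →
    (ρ m).2 j = s (List.ofFn fun l : Fin m => ρ l) (ρ m).1 (fun i _ => (ρ m).2 i)

/-- Agent `j` forces the set of plays `P` from the position consisting of the first `n`
steps of `ρ`, where the other agents' components of the step-`n` decision are fixed to
those of `ρ n` (and the other agents are unconstrained from step `n+1` onward). -/
def ForcesFromPrefix (j : Fin G.k) (ρ : ℕ → G.V × G.D) (n : ℕ)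
    (P : (ℕ → G.V × G.D) → Prop) : Prop :=
  ∃ s : G.InfStrategy j, ∀ ρ' : ℕ → G.V × G.D, G.IsPlay ρ' →
    (∀ m : ℕ, m < n → ρ' m = ρ m) →
    (∀ i : Fin G.k, i ≠ j → (ρ' n).2 i = (ρ n).2 i) →
    G.Consistent j s ρ' n → P ρ'

end DSGame

/-- Comparison relations for satisficing goals. -/
inductive SRel | lt | le | gt | ge | eq | ne

def SRel.holds : SRel → ℝ → ℝ → Prop
  | .lt, a, b => a < b
  | .le, a, b => a ≤ b
  | .gt, a, b => a > b
  | .ge, a, b => a ≥ b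
  | .eq, a, b => a = b
  | .ne, a, b => a ≠ b

/-- Nash equilibrium of a satisficing game: no agent `i` has a deviation `πi'` such that
its satisficing goal holds on the deviant trace but fails on the primary trace. -/
def SatNE (G : DSGame) (R : Fin G.k → SRel) (t : Fin G.k → ℚ) (π : G.Profile) : Prop :=
  ∀ (i : Fin G.k) (πi' : G.Strategy i),
    ¬ ((R i).holds (G.reward i (G.play (G.updProf π i πi'))) (t i) ∧
       ¬ (R i).holds (G.reward i (G.play π)) (t i))

/-- `W`-NE of a satisficing game: a Nash equilibrium whose primary trace satisfies
exactly the goals of the agents in `W`. -/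
def SatWNE (G : DSGame) (R : Fin G.k → SRel) (t : Fin G.k → ℚ)
    (W : Set (Fin G.k)) (π : G.Profile) : Prop :=
  SatNE G R t π ∧ ∀ i : Fin G.k, (R i).holds (G.reward i (G.play π)) (t i) ↔ i ∈ W

/-- Comparison relations allowed in multi-satisficing goals. -/
inductive MRel | lt | le | gt | ge

def MRel.holds : MRel → ℝ → ℝ → Prop
  | .lt, a, b => a < b
  | .le, a, b => a ≤ b
  | .gt, a, b => a > b
  | .ge, a, b => a ≥ b

open Classical in
/-- Payoff of agent `i` with multi-satisficing goal `⟨R, T⟩` on play `ρ`: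
the number of thresholds `t ∈ T` such that `R_i(ρ) R t` holds. -/
noncomputable def msPayoff (G : DSGame) (R : MRel) (T : List ℚ) (i : Fin G.k)
    (ρ : ℕ → G.V × G.D) : ℕ :=
  (T.filter fun tq => decide (R.holds (G.reward i ρ) (tq : ℝ))).length

/-- Nash equilibrium of a multi-satisficing game: no agent has a unilateral deviation
yielding a strictly greater payoff. -/
def MSNash (G : DSGame) (R : Fin G.k → MRel) (T : Fin G.k → List ℚ) (σ : G.Profile) : Prop :=
  ∀ (i : Fin G.k) (σi' : G.Strategy i),
    ¬ (msPayoff G (R i) (T i) i (G.play σ) <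
       msPayoff G (R i) (T i) i (G.play (G.updProf σ i σi')))



lemma play_isPlay (G : DSGame) (π : G.Profile) : G.IsPlay (G.play π) :=
  ⟨rfl, fun _ => rfl⟩

lemma exists_threshold {ε R : ℝ} :
    ∀ (l : List ℝ), l.Chain' (fun a b => b - a ≤ ε) →
      ∀ (h : l ≠ []), l.head h < R → R ≤ l.getLast h →
      ∃ t ∈ l, R - ε ≤ t ∧ t < R := by
  intro l
  induction l with
  | nil => intro _ h; exact absurd rfl h
  | cons a tl ih =>
    intro hc h hhead hlast
    cases tl with
    | nil =>
      simp only [List.head_cons, List.getLast_singleton] at hhead hlast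
      exact absurd (lt_of_lt_of_le hhead hlast) (lt_irrefl _)
    | cons b tl' =>
      by_cases hb : b < R
      · obtain ⟨t, ht, h1, h2⟩ := ih hc.tail (by simp) (by simpa using hb)
          (by rw [List.getLast_cons (by simp : (b :: tl' : List ℝ) ≠ [])] at hlast; exact hlast)
        exact ⟨t, List.mem_cons_of_mem _ ht, h1, h2⟩
      · refine ⟨a, List.mem_cons_self, ?_, by simpa using hhead⟩
        have hgap : b - a ≤ ε := hc.rel_head
        push_neg at hb
        linarith

lemma countP_lt {p q : ℝ → Bool} :
    ∀ (l : List ℝ), (∀ a ∈ l, p a = true → q a = true) →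
      ∀ a ∈ l, q a = true → p a = false →
      (l.filter p).length < (l.filter q).length := by
  intro l
  induction l with
  | nil => intro _ a ha; exact absurd ha List.not_mem_nil
  | cons x tl ih =>
    intro hmono a ha hq hp
    have hsub : (tl.filter p).length ≤ (tl.filter q).length := by
      rw [← List.countP_eq_length_filter, ← List.countP_eq_length_filter]
      exact List.countP_mono_left fun b hb => hmono b (List.mem_cons_of_mem _ hb)
    rcases List.mem_cons.mp ha with rfl | ha'
    · simp only [List.filter_cons, hq, hp]
      simpa using Nat.lt_succ_of_le hsub
    · have hlt := ih (fun b hb => hmono b (List.mem_cons_of_mem _ hb)) a ha' hq hp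
      simp only [List.filter_cons]
      cases hx : p x
      · cases hqx : q x <;> simp [hqx] <;> omega
      · have hqx := hmono x List.mem_cons_self hx
        simp [hqx, hx]; omega

lemma coeM_eq_map (l : List ℚ) :
    (do let a ← l; pure ((a : ℝ)) : List ℝ) = List.map Rat.cast l := by
  induction l with
  | nil => rfl
  | cons a tl ih => simp only [List.map_cons, ← ih]; rfl

/-- Minimizing variant of the ε-correspondence: if every agent `i` has a
multi-satisficing goal `⟨≤, T i⟩` whose smallest threshold lower-bounds and largest
threshold upper-bounds the cumulative reward of `i` on every play, and whose consecutive
thresholds differ by at most `ε`, then in every Nash equilibrium `σ` of the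
multi-satisficing game no agent can unilaterally decrease his cumulative reward by at
least `ε`. -/
theorem epsilon_equilibria_correspondence_min (G : DSGame) (ε : ℝ) (hε : 0 < ε)
    (T : Fin G.k → List ℚ) (hne : ∀ i : Fin G.k, T i ≠ [])
    (hsort : ∀ i : Fin G.k, (T i).Pairwise (· ≤ ·))
    (hlow : ∀ (i : Fin G.k) (ρ : ℕ → G.V × G.D), G.IsPlay ρ →
      (((T i).head (hne i) : ℚ) : ℝ) ≤ G.reward i ρ)
    (hhigh : ∀ (i : Fin G.k) (ρ : ℕ → G.V × G.D), G.IsPlay ρ →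
      G.reward i ρ ≤ (((T i).getLast (hne i) : ℚ) : ℝ))
    (hgap : ∀ i : Fin G.k, (T i).Chain' fun a b => (b : ℝ) - (a : ℝ) ≤ ε)
    (σ : G.Profile) (hσ : MSNash G (fun _ => MRel.le) T σ) :
    ∀ (i : Fin G.k) (σi' : G.Strategy i),
      ¬ (G.reward i (G.play (G.updProf σ i σi')) ≤ G.reward i (G.play σ) - ε) := by
  intro i σi' hdev
  set R := G.reward i (G.play σ) with hR
  set R' := G.reward i (G.play (G.updProf σ i σi')) with hR'
  have hplay : G.IsPlay (G.play σ) := play_isPlay G σ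
  have hplay' : G.IsPlay (G.play (G.updProf σ i σi')) := play_isPlay G _
  set L : List ℝ := List.map Rat.cast (T i) with hL
  have hLne : L ≠ [] := by simp [hL, hne i]
  have hheadL : L.head hLne = (((T i).head (hne i) : ℚ) : ℝ) := List.head_map _
  have hlastL : L.getLast hLne = (((T i).getLast (hne i) : ℚ) : ℝ) := List.getLast_map _
  have hhead : L.head hLne < R := by
    rw [hheadL]
    have h1 := hlow i _ hplay'
    calc (((T i).head (hne i) : ℚ) : ℝ) ≤ R' := h1
      _ ≤ R - ε := hdev
      _ < R := by linarith
  have hlast : R ≤ L.getLast hLne := by rw [hlastL]; exact hhigh i _ hplay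
  have hchain : L.Chain' (fun a b => b - a ≤ ε) := by
    have := hgap i
    rwa [coeM_eq_map] at this
  obtain ⟨t, htmem, ht1, ht2⟩ := exists_threshold L hchain hLne hhead hlast
  apply hσ i σi'
  unfold msPayoff
  rw [coeM_eq_map]
  apply countP_lt L
  · intro a _ h
    simp only [decide_eq_true_eq, MRel.holds] at *
    convert decide_eq_true (le_trans (by linarith : R' ≤ R) (of_decide_eq_true h)) <;> exact decide_eq_decide.mpr Iff.rfl
  · exact htmem
  · simp only [decide_eq_true_eq, MRel.holds]
    convert decide_eq_true (by linarith : R' ≤ t) <;> exact decide_eq_decide.mpr Iff.rfl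
  · simp only [decide_eq_false_iff_not, MRel.holds]
    convert decide_eq_false (not_le.mpr ht2) <;> exact decide_eq_decide.mpr Iff.rfl
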